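/- The functions g₁(t) = g₂(t) = (1 - 6t)^{1/6} and g₃(t) = (1 - 6t)^{-1/6} satisfy the ODE system ġ₁ = -g₃²/(g₁ g₂²), ġ₂ = -g₃²/(g₁² g₂), ġ₃ = g₃³/(g₁² g₂²) on (-∞, 1/6) with initial conditions g₁(0) = g₂(0) = g₃(0) = 1. -/
import Mathlib


/-- the functions `g₁(t) = g₂(t) = (1-6t)^(1/6)` and `g₃(t) = (1-6t)^(-1/6)`
satisfy the ODE system `ġ₁ = -g₃²/(g₁g₂²)`, `ġ₂ = -g₃²/(g₁²g₂)`, `ġ₃ = g₃³/(g₁²g₂²)` on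
`(-∞, 1/6)` with `g₁(0) = g₂(0) = g₃(0) = 1`. -/
theorem iwasawa_flow_solution
    (g1 g2 g3 : ℝ → ℝ)
    (hg1 : ∀ t, g1 t = (1 - 6 * t) ^ ((1 : ℝ) / 6))
    (hg2 : ∀ t, g2 t = (1 - 6 * t) ^ ((1 : ℝ) / 6))
    (hg3 : ∀ t, g3 t = (1 - 6 * t) ^ (-(1 : ℝ) / 6)) :
    g1 0 = 1 ∧ g2 0 = 1 ∧ g3 0 = 1 ∧
    ∀ t < (1 : ℝ) / 6,
      HasDerivAt g1 (-(g3 t) ^ 2 / (g1 t * (g2 t) ^ 2)) t ∧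
      HasDerivAt g2 (-(g3 t) ^ 2 / ((g1 t) ^ 2 * g2 t)) t ∧
      HasDerivAt g3 ((g3 t) ^ 3 / ((g1 t) ^ 2 * (g2 t) ^ 2)) t := by
  have hG1 : g1 = fun t => (1 - 6 * t) ^ ((1 : ℝ) / 6) := funext hg1
  have hG2 : g2 = fun t => (1 - 6 * t) ^ ((1 : ℝ) / 6) := funext hg2
  have hG3 : g3 = fun t => (1 - 6 * t) ^ (-(1 : ℝ) / 6) := funext hg3
  subst hG1 hG2 hG3
  refine ⟨by norm_num, by norm_num, by norm_num, ?_⟩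
  intro t ht
  have hu : (0 : ℝ) < 1 - 6 * t := by linarith
  have hin : HasDerivAt (fun t : ℝ => 1 - 6 * t) (-6) t := by
    simpa using ((hasDerivAt_id t).const_mul (6 : ℝ)).const_sub 1
  set u : ℝ := 1 - 6 * t with hudef
  have pow2 : ∀ a : ℝ, (u ^ a) ^ 2 = u ^ (2 * a) := fun a => by
    rw [← Real.rpow_natCast (u ^ a) 2, ← Real.rpow_mul hu.le]; ring_nf
  have pow3 : ∀ a : ℝ, (u ^ a) ^ 3 = u ^ (3 * a) := fun a => by
    rw [← Real.rpow_natCast (u ^ a) 3, ← Real.rpow_mul hu.le]; ring_nf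
  have h12 : HasDerivAt (fun t : ℝ => (1 - 6 * t) ^ ((1 : ℝ) / 6))
      (-(u ^ (-(1:ℝ)/6)) ^ 2 / (u ^ ((1:ℝ)/6) * (u ^ ((1:ℝ)/6)) ^ 2)) t := by
    have := hin.rpow_const (p := (1:ℝ)/6) (Or.inl hu.ne')
    convert this using 1
    rw [pow2, pow2, neg_div, ← Real.rpow_add hu, ← Real.rpow_sub hu]
    rw [← hudef]
    rw [show (-6:ℝ) * (1/6) * u ^ ((1:ℝ)/6 - 1) = -(u ^ ((1:ℝ)/6 - 1)) by ring]
    norm_num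
  refine ⟨h12, by convert h12 using 2; ring, ?_⟩
  have := hin.rpow_const (p := -(1:ℝ)/6) (Or.inl hu.ne')
  convert this using 1
  rw [pow3, pow2, ← Real.rpow_add hu, ← Real.rpow_sub hu]
  rw [← hudef]
  rw [show (-6:ℝ) * (-1/6) * u ^ (-(1:ℝ)/6 - 1) = u ^ (-(1:ℝ)/6 - 1) by ring]
  norm_num
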